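/- Let β ≥ 1, h, w > 0, and let t be a Lebesgue-measurable subset of [0,w]×[0,h] of positive area that is downward closed in the sense that whenever (x,y) ∈ t, the rectangle [0,x]×[0,y] is contained in t. If every axis-aligned rectangle contained in t has area less than area(t)/β, then area(t) ≤ (β/e^{β−1}) · h·w. -/

import Mathlib

open MeasureTheory

theorem stmt4 (β h w : ℝ) (hβ : 1 ≤ β) (hh : 0 < h) (hw : 0 < w)
    (t : Set (ℝ × ℝ)) (hmeas : MeasurableSet t)
    (hsub : t ⊆ Set.Icc (0:ℝ) w ×ˢ Set.Icc (0:ℝ) h)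
    (hpos : 0 < (volume t).toReal)
    (hdc : ∀ p ∈ t, Set.Icc (0:ℝ) p.1 ×ˢ Set.Icc (0:ℝ) p.2 ⊆ t)
    (hrect : ∀ a b c d : ℝ, a ≤ b → c ≤ d →
      Set.Icc a b ×ˢ Set.Icc c d ⊆ t → (b - a) * (d - c) < (volume t).toReal / β) :
    (volume t).toReal ≤ β / Real.exp (β - 1) * (h * w) := by
  have hβ0 : (0:ℝ) < β := lt_of_lt_of_le one_pos hβ
  set A := (volume t).toReal with hA
  set B := A / β with hB
  have hBpos : 0 < B := div_pos hpos hβ0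
  set x0 := B / h with hx0
  have hx0pos : 0 < x0 := div_pos hBpos hh
  -- t has finite measure and area at most w*h
  have htfin : volume t ≤ ENNReal.ofReal (w * h) := by
    calc volume t ≤ volume (Set.Icc (0:ℝ) w ×ˢ Set.Icc (0:ℝ) h) := measure_mono hsub
      _ = ENNReal.ofReal (w * h) := by
          rw [MeasureTheory.Measure.volume_eq_prod, Measure.prod_prod, Real.volume_Icc,
            Real.volume_Icc, sub_zero, sub_zero, ← ENNReal.ofReal_mul hw.le]
  have hAhw : A ≤ w * h :=
    ENNReal.toReal_le_of_le_ofReal (by positivity) htfin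
  have hx0w : x0 ≤ w := by
    have h1 : B ≤ w * h := by
      have : A / β ≤ A := by
        rw [div_le_iff₀ hβ0]
        nlinarith
      linarith
    rw [hx0, div_le_iff₀ hh]
    linarith
  -- the slice bound
  set f1 : ℝ → ENNReal := (Set.Ioc (0:ℝ) x0).indicator (fun _ => ENNReal.ofReal h) with hf1
  set f2 : ℝ → ENNReal := (Set.Ioc x0 w).indicator (fun x => ENNReal.ofReal (B / x)) with hf2
  have hslice : volume t = ∫⁻ x, volume (Prod.mk x ⁻¹' t) := by
    rw [MeasureTheory.Measure.volume_eq_prod, Measure.prod_apply hmeas]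
  have hbound : ∀ᵐ x : ℝ, volume (Prod.mk x ⁻¹' t) ≤ f1 x + f2 x := by
    have h0 : ∀ᵐ x : ℝ, x ≠ 0 := by
      rw [MeasureTheory.ae_iff]
      simp only [ne_eq, not_not]
      have : {x : ℝ | x = 0} = {0} := by ext x; simp
      rw [this, Real.volume_singleton]
    filter_upwards [h0] with x hx0'
    by_cases hxmem : x ∈ Set.Ioc (0:ℝ) w
    · -- slice ⊆ Icc 0 (min h (B/x))
      have hxpos : 0 < x := hxmem.1
      have hsl : Prod.mk x ⁻¹' t ⊆ Set.Icc (0:ℝ) (min h (B / x)) := by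
        intro y hy
        have hy' : (x, y) ∈ t := hy
        have hbox := hsub hy'
        simp only [Set.mem_prod, Set.mem_Icc] at hbox
        have hy0 : 0 ≤ y := hbox.2.1
        have hrec : (x - 0) * (y - 0) < A / β :=
          hrect 0 x 0 y hxpos.le hy0 (hdc (x, y) hy')
        have hxy : x * y < B := by simpa using hrec
        have hyB : y ≤ B / x := by
          rw [le_div_iff₀ hxpos]
          nlinarith
        exact ⟨hy0, le_min hbox.2.2 hyB⟩
      have hmeasle : volume (Prod.mk x ⁻¹' t) ≤ ENNReal.ofReal (min h (B / x)) := by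
        calc volume (Prod.mk x ⁻¹' t) ≤ volume (Set.Icc (0:ℝ) (min h (B / x))) :=
              measure_mono hsl
          _ = ENNReal.ofReal (min h (B / x)) := by rw [Real.volume_Icc, sub_zero]
      by_cases hxx0 : x ≤ x0
      · have h1 : f1 x = ENNReal.ofReal h := by
          rw [hf1, Set.indicator_of_mem (Set.mem_Ioc.mpr ⟨hxpos, hxx0⟩)]
        calc volume (Prod.mk x ⁻¹' t) ≤ ENNReal.ofReal (min h (B / x)) := hmeasle
          _ ≤ ENNReal.ofReal h := ENNReal.ofReal_le_ofReal (min_le_left _ _)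
          _ = f1 x := h1.symm
          _ ≤ f1 x + f2 x := le_self_add
      · push_neg at hxx0
        have h2 : f2 x = ENNReal.ofReal (B / x) := by
          rw [hf2, Set.indicator_of_mem (Set.mem_Ioc.mpr ⟨hxx0, hxmem.2⟩)]
        calc volume (Prod.mk x ⁻¹' t) ≤ ENNReal.ofReal (min h (B / x)) := hmeasle
          _ ≤ ENNReal.ofReal (B / x) := ENNReal.ofReal_le_ofReal (min_le_right _ _)
          _ = f2 x := h2.symm
          _ ≤ f1 x + f2 x := le_add_self
    · have hempty : Prod.mk x ⁻¹' t = ∅ := by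
        ext y
        simp only [Set.mem_preimage, Set.mem_empty_iff_false, iff_false]
        intro hy
        have hbox := hsub hy
        simp only [Set.mem_prod, Set.mem_Icc] at hbox
        exact hxmem ⟨lt_of_le_of_ne hbox.1.1 (Ne.symm hx0'), hbox.1.2⟩
      rw [hempty]
      simp
  -- compute the integrals of f1 and f2
  have hint1 : ∫⁻ x, f1 x = ENNReal.ofReal B := by
    rw [hf1, lintegral_indicator_const measurableSet_Ioc, Real.volume_Ioc, sub_zero,
      ← ENNReal.ofReal_mul hh.le]
    congr 1
    rw [hx0]
    field_simp
  have hcont : ContinuousOn (fun x : ℝ => B / x) (Set.Icc x0 w) := by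
    apply ContinuousOn.div continuousOn_const continuousOn_id
    intro x hx
    exact ne_of_gt (lt_of_lt_of_le hx0pos hx.1)
  have hintg : IntegrableOn (fun x : ℝ => B / x) (Set.Ioc x0 w) := by
    exact (hcont.integrableOn_Icc).mono_set Set.Ioc_subset_Icc_self
  have hlog0 : 0 ≤ Real.log (w / x0) :=
    Real.log_nonneg ((one_le_div hx0pos).mpr hx0w)
  have hint2 : ∫⁻ x, f2 x = ENNReal.ofReal (B * Real.log (w / x0)) := by
    rw [hf2, lintegral_indicator measurableSet_Ioc _]
    rw [← MeasureTheory.ofReal_integral_eq_lintegral_ofReal hintg]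
    · congr 1
      rw [← intervalIntegral.integral_of_le hx0w]
      have : ∀ x : ℝ, B / x = B * x⁻¹ := fun x => div_eq_mul_inv B x
      simp_rw [this]
      rw [intervalIntegral.integral_const_mul, integral_inv]
      intro hmem
      rw [Set.uIcc_of_le hx0w] at hmem
      exact absurd hmem.1 (not_le.mpr hx0pos)
    · filter_upwards [MeasureTheory.ae_restrict_mem measurableSet_Ioc] with x hx
      exact div_nonneg hBpos.le (hx0pos.trans hx.1).le
  -- put together
  have hkey : volume t ≤ ENNReal.ofReal (B + B * Real.log (w / x0)) := by
    calc volume t = ∫⁻ x, volume (Prod.mk x ⁻¹' t) := hslice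
      _ ≤ ∫⁻ x, (f1 x + f2 x) := lintegral_mono_ae hbound
      _ = (∫⁻ x, f1 x) + ∫⁻ x, f2 x := by
          apply lintegral_add_left
          rw [hf1]
          exact Measurable.indicator measurable_const measurableSet_Ioc
      _ = ENNReal.ofReal B + ENNReal.ofReal (B * Real.log (w / x0)) := by
          rw [hint1, hint2]
      _ = ENNReal.ofReal (B + B * Real.log (w / x0)) := by
          rw [ENNReal.ofReal_add hBpos.le (by positivity)]
  have hAle : A ≤ B + B * Real.log (w / x0) :=
    ENNReal.toReal_le_of_le_ofReal (by positivity) hkey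
  -- final algebra
  have hAB : A = β * B := by
    rw [hB]; field_simp
  have hβle : β ≤ 1 + Real.log (w / x0) := by
    have : β * B ≤ (1 + Real.log (w / x0)) * B := by
      rw [← hAB]; linarith
    exact le_of_mul_le_mul_right this hBpos
  have hexp : Real.exp (β - 1) ≤ w / x0 := by
    calc Real.exp (β - 1) ≤ Real.exp (Real.log (w / x0)) :=
          Real.exp_le_exp.mpr (by linarith)
      _ = w / x0 := Real.exp_log (div_pos hw hx0pos)
  have hwx0 : w / x0 = β * (h * w) / A := by
    rw [hx0, hB]
    field_simp
  rw [hwx0] at hexp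
  rw [div_mul_eq_mul_div, le_div_iff₀ (Real.exp_pos _)]
  calc A * Real.exp (β - 1) ≤ A * (β * (h * w) / A) :=
        mul_le_mul_of_nonneg_left hexp hpos.le
    _ = β * (h * w) := by field_simp
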